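/- The ideal m is indecomposable as an R-module; in particular there is no surjective R-module homomorphism from m onto R when m is not principal. -/
import Mathlib


/-- Over a one-dimensional Noetherian local domain `(R, m, k)` with `m` not
principal, the maximal ideal `m` is indecomposable as an `R`-module; in particular there is
no surjective `R`-module homomorphism from `m` onto `R`. -/
theorem stmt0 (R : Type*) [CommRing R] [IsDomain R] [IsNoetherianRing R] [IsLocalRing R]
    (hdim : ringKrullDim R = 1)
    (hnp : ¬ (IsLocalRing.maximalIdeal R).IsPrincipal) :
    (¬ ∃ (N P : Submodule R (IsLocalRing.maximalIdeal R)),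
        N ≠ ⊥ ∧ P ≠ ⊥ ∧ IsCompl N P) ∧
    (¬ ∃ f : (IsLocalRing.maximalIdeal R) →ₗ[R] R, Function.Surjective f) := by
  have key : ¬ ∃ (N P : Submodule R (IsLocalRing.maximalIdeal R)),
      N ≠ ⊥ ∧ P ≠ ⊥ ∧ IsCompl N P := by
    rintro ⟨N, P, hN, hP, hc⟩
    obtain ⟨n, hnN, hn0⟩ := Submodule.ne_bot_iff N |>.mp hN
    obtain ⟨p, hpP, hp0⟩ := Submodule.ne_bot_iff P |>.mp hP
    have hz : ((p : R)) • n = ((n : R)) • p := by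
      ext
      simp [mul_comm]
    have hmemN : ((p : R)) • n ∈ N := N.smul_mem _ hnN
    have hmemP : ((p : R)) • n ∈ P := hz ▸ P.smul_mem _ hpP
    have h0 : ((p : R)) • n = 0 :=
      (Submodule.disjoint_def.mp hc.disjoint) _ hmemN hmemP
    have hv : (p : R) * (n : R) = 0 := by
      have := congrArg (fun x => ((x : IsLocalRing.maximalIdeal R) : R)) h0
      simpa using this
    have hp' : (p : R) ≠ 0 := fun h => hp0 (Subtype.ext h)
    have hn' : (n : R) ≠ 0 := fun h => hn0 (Subtype.ext h)
    rcases mul_eq_zero.mp hv with h | h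
    · exact hp' h
    · exact hn' h
  refine ⟨key, ?_⟩
  rintro ⟨f, hf⟩
  obtain ⟨g, hg⟩ := Module.projective_lifting_property f LinearMap.id hf
  have hgf : ∀ y : R, f (g y) = y := fun y => LinearMap.congr_fun hg y
  by_cases hk : LinearMap.ker f = ⊥
  · apply hnp
    have hinj : Function.Injective f := LinearMap.ker_eq_bot.mp hk
    let e : (IsLocalRing.maximalIdeal R) ≃ₗ[R] R :=
      LinearEquiv.ofBijective f ⟨hinj, hf⟩
    refine ⟨⟨((e.symm 1 : IsLocalRing.maximalIdeal R) : R), ?_⟩⟩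
    ext a
    rw [Ideal.submodule_span_eq, Ideal.mem_span_singleton']
    constructor
    · intro ha
      set b : (IsLocalRing.maximalIdeal R) := ⟨a, ha⟩ with hb
      refine ⟨f b, ?_⟩
      have h1 : (f b) • (e.symm 1) = b := by
        rw [← LinearEquiv.map_smul, smul_eq_mul, mul_one]
        show e.symm (e b) = b
        exact e.symm_apply_apply b
      have := congrArg (fun x => ((x : IsLocalRing.maximalIdeal R) : R)) h1
      simpa [smul_eq_mul] using this
    · rintro ⟨r, rfl⟩
      exact Ideal.mul_mem_left _ r (e.symm 1).2
  · apply key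
    refine ⟨LinearMap.ker f, LinearMap.range g, hk, ?_, ?_, ?_⟩
    · rw [Submodule.ne_bot_iff]
      refine ⟨g 1, ⟨1, rfl⟩, fun h => ?_⟩
      have : f (g 1) = 0 := by rw [h]; simp
      rw [hgf 1] at this
      exact one_ne_zero this
    · rw [Submodule.disjoint_def]
      rintro x hxk ⟨y, rfl⟩
      have : y = 0 := by
        have := hgf y
        rw [LinearMap.mem_ker.mp hxk] at this
        exact this.symm
      rw [this, map_zero]
    · rw [codisjoint_iff, eq_top_iff]
      intro x _
      have hsplit : x = (x - g (f x)) + g (f x) := by abel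
      rw [hsplit]
      refine Submodule.add_mem _ (Submodule.mem_sup_left ?_) (Submodule.mem_sup_right ⟨f x, rfl⟩)
      rw [LinearMap.mem_ker, map_sub, hgf (f x), sub_self]
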